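/- Let K ≥ 2 and define d : ℝ^K → ℝ by d(x₁,…,x_K) = ∏_{1 ≤ i < j ≤ K} (x_j − x_i). Then at every point x with pairwise distinct coordinates, for all indices i ≠ j the mixed second partial derivative is ∂²d/∂x_i∂x_j = d(x)·[ (∑_{k ≠ i} 1/(x_i − x_k))·(∑_{l ≠ j} 1/(x_j − x_l)) + 1/(x_j − x_i)² ]. (The off-diagonal Hessian formula for the Vandermonde determinant used in Section 5.) -/

import Mathlib

open Finset


noncomputable def Lmap (K : ℕ) (p : Σ _ : Fin K, Fin K) : (Fin K → ℝ) →L[ℝ] ℝ :=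
  (ContinuousLinearMap.proj p.2 : ((Fin K → ℝ)) →L[ℝ] ℝ) - ContinuousLinearMap.proj p.1

lemma hasFDerivAt_vdm (K : ℕ) (y : Fin K → ℝ) :
    HasFDerivAt (fun x : Fin K → ℝ => ∏ i, ∏ j ∈ Finset.Ioi i, (x j - x i))
      (∑ p ∈ Finset.univ.sigma fun i => Finset.Ioi i,
        (∏ q ∈ (Finset.univ.sigma fun i => Finset.Ioi i).erase p, (y q.2 - y q.1)) • Lmap K p) y := by
  have h : (fun x : Fin K → ℝ => ∏ i, ∏ j ∈ Finset.Ioi i, (x j - x i))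
      = fun x => ∏ p ∈ Finset.univ.sigma fun i => Finset.Ioi i, (x p.2 - x p.1) := by
    funext x
    exact Finset.prod_sigma' _ _ _
  rw [h]
  exact HasFDerivAt.finset_prod fun p _ => by simpa [Lmap, Pi.sub_def] using (Lmap K p).hasFDerivAt (x := y)

lemma fderiv_vdm_apply (K : ℕ) (y : Fin K → ℝ) (hy : Function.Injective y) (j : Fin K) :
    fderiv ℝ (fun x : Fin K → ℝ => ∏ i, ∏ j ∈ Finset.Ioi i, (x j - x i)) y (Pi.single j 1)
      = (∏ i, ∏ j ∈ Finset.Ioi i, (y j - y i)) * ∑ l ∈ Finset.univ.erase j, (y j - y l)⁻¹ := by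
  set dy := ∏ i, ∏ j ∈ Finset.Ioi i, (y j - y i) with hdy
  set u := Finset.univ.sigma fun i : Fin K => Finset.Ioi i with hu
  have hne : ∀ p ∈ u, y p.2 - y p.1 ≠ 0 := by
    intro p hp
    simp only [hu, Finset.mem_sigma, Finset.mem_Ioi] at hp
    exact sub_ne_zero.2 (fun h => absurd (hy h) (ne_of_gt hp.2))
  have hdy' : dy = ∏ p ∈ u, (y p.2 - y p.1) := Finset.prod_sigma' _ _ _
  have hc : ∀ p ∈ u, ∏ q ∈ u.erase p, (y q.2 - y q.1) = dy * (y p.2 - y p.1)⁻¹ := by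
    intro p hp
    have := Finset.mul_prod_erase u (fun q => y q.2 - y q.1) hp
    rw [hdy', ← Finset.mul_prod_erase u _ hp, mul_comm (y p.2 - y p.1), mul_assoc, mul_inv_cancel₀ (hne p hp), mul_one]
  rw [(hasFDerivAt_vdm K y).fderiv]
  simp only [ContinuousLinearMap.coe_sum', Finset.sum_apply, ContinuousLinearMap.coe_smul',
    Pi.smul_apply, smul_eq_mul, Lmap, ContinuousLinearMap.sub_apply, ContinuousLinearMap.proj_apply]
  rw [Finset.sum_congr rfl fun p hp => by rw [hc p hp]]
  have : ∀ p : Σ _ : Fin K, Fin K, dy * (y p.2 - y p.1)⁻¹ * ((Pi.single j 1 : Fin K → ℝ) p.2 - (Pi.single j 1 : Fin K → ℝ) p.1)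
      = dy * ((y p.2 - y p.1)⁻¹ * ((Pi.single j 1 : Fin K → ℝ) p.2 - (Pi.single j 1 : Fin K → ℝ) p.1)) := fun p => by ring
  rw [Finset.sum_congr rfl fun p _ => this p, ← Finset.mul_sum]
  congr 1
  rw [Finset.sum_sigma]
  have key : ∀ i : Fin K, ∀ j' ∈ Finset.Ioi i,
      (y j' - y i)⁻¹ * ((Pi.single j 1 : Fin K → ℝ) j' - (Pi.single j 1 : Fin K → ℝ) i)
      = (if j' = j then (y j - y i)⁻¹ else 0) - (if i = j then (y j' - y j)⁻¹ else 0) := by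
    intro i j' hj'
    rcases eq_or_ne j' j with h1 | h1 <;> rcases eq_or_ne i j with h2 | h2
    · exact absurd (h1 ▸ h2 ▸ Finset.mem_Ioi.1 hj') (lt_irrefl _)
    · simp [h1, h2, Pi.single_apply]
    · simp [h1, h2, Pi.single_apply]
    · simp [h1, h2, Pi.single_apply]
  rw [Finset.sum_congr rfl fun i _ => Finset.sum_congr rfl fun j' hj' => key i j' hj']
  simp only [Finset.sum_sub_distrib]
  have hA : ∀ i : Fin K, (∑ j' ∈ Finset.Ioi i, if j' = j then (y j - y i)⁻¹ else 0)
      = if j ∈ Finset.Ioi i then (y j - y i)⁻¹ else 0 := fun i =>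
    Finset.sum_ite_eq' (Finset.Ioi i) j _
  have hB : ∀ i : Fin K, (∑ j' ∈ Finset.Ioi i, if i = j then (y j' - y j)⁻¹ else 0)
      = if i = j then ∑ j' ∈ Finset.Ioi j, (y j' - y j)⁻¹ else 0 := by
    intro i; by_cases h : i = j <;> simp [h]
  rw [Finset.sum_congr rfl fun i _ => hA i, Finset.sum_congr rfl fun i _ => hB i,
    Finset.sum_ite_eq' Finset.univ j fun _ => ∑ j' ∈ Finset.Ioi j, (y j' - y j)⁻¹]
  simp only [Finset.mem_Ioi, Finset.mem_univ, if_true]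
  have hA2 : (∑ i : Fin K, if i < j then (y j - y i)⁻¹ else 0)
      = ∑ i ∈ Finset.Iio j, (y j - y i)⁻¹ := by
    rw [← Finset.sum_filter]
    congr 1
    ext k
    simp
  rw [hA2]
  have herase : Finset.univ.erase j = Finset.Iio j ∪ Finset.Ioi j := by
    ext k
    simp only [Finset.mem_erase, Finset.mem_univ, and_true, Finset.mem_union,
      Finset.mem_Iio, Finset.mem_Ioi]
    exact ne_iff_lt_or_gt
  rw [herase, Finset.sum_union (Finset.disjoint_left.2 fun k hk hk' =>
    absurd (lt_trans (Finset.mem_Iio.1 hk) (Finset.mem_Ioi.1 hk')) (lt_irrefl _))]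
  have hneg : ∑ l ∈ Finset.Ioi j, (y j - y l)⁻¹ = -∑ l ∈ Finset.Ioi j, (y l - y j)⁻¹ := by
    rw [← Finset.sum_neg_distrib]
    exact Finset.sum_congr rfl fun l _ => by rw [← neg_sub, inv_neg]
  rw [hneg]; ring

lemma isOpen_inj (K : ℕ) : IsOpen {y : Fin K → ℝ | Function.Injective y} := by
  have h : {y : Fin K → ℝ | Function.Injective y}
      = ⋂ p : Fin K × Fin K, {y : Fin K → ℝ | p.1 ≠ p.2 → y p.1 ≠ y p.2} := by
    ext y
    simp only [Set.mem_setOf_eq, Set.mem_iInter]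
    constructor
    · intro h p hp hy; exact hp (h hy)
    · intro h a b hab; by_contra hne; exact h (a, b) hne hab
  rw [h]
  refine isOpen_iInter_of_finite fun p => ?_
  by_cases hp : p.1 = p.2
  · simp [hp]
  · have : {y : Fin K → ℝ | p.1 ≠ p.2 → y p.1 ≠ y p.2}
        = {y : Fin K → ℝ | y p.1 = y p.2}ᶜ := by
      ext y; simp [hp]
    rw [this]
    exact (isClosed_eq (continuous_apply p.1) (continuous_apply p.2)).isOpen_compl

/-- Off-diagonal Hessian formula for the Vandermonde determinant
`d(x) = ∏_{i<j} (x_j − x_i)`: at every point with pairwise distinct coordinates,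
for `i ≠ j`,
`∂²d/∂x_i∂x_j = d(x)·[(∑_{k≠i} 1/(x_i−x_k))·(∑_{l≠j} 1/(x_j−x_l)) + 1/(x_j−x_i)²]`. -/
theorem vandermonde_det_hessian_offdiag (K : ℕ) (hK : 2 ≤ K)
    (d : (Fin K → ℝ) → ℝ)
    (hd : d = fun x => ∏ i, ∏ j ∈ Finset.Ioi i, (x j - x i))
    (x : Fin K → ℝ) (hx : Function.Injective x) :
    ∀ i j : Fin K, i ≠ j →
      fderiv ℝ (fun y => fderiv ℝ d y (Pi.single j 1)) x (Pi.single i 1)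
        = d x * ((∑ k ∈ Finset.univ.erase i, 1 / (x i - x k))
            * (∑ l ∈ Finset.univ.erase j, 1 / (x j - x l))
            + 1 / (x j - x i) ^ 2) := by
  subst hd
  intro i j hij
  set d : (Fin K → ℝ) → ℝ := fun x => ∏ i, ∏ j ∈ Finset.Ioi i, (x j - x i) with hd
  -- the first derivative function agrees with d * S near x
  have hEv : (fun y => fderiv ℝ d y (Pi.single j 1))
      =ᶠ[nhds x] fun y => d y * ∑ l ∈ Finset.univ.erase j, (y j - y l)⁻¹ := by
    filter_upwards [(isOpen_inj K).mem_nhds hx] with y hy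
    exact fderiv_vdm_apply K y hy j
  rw [hEv.fderiv_eq]
  -- derivatives of the factors
  have hdD : HasFDerivAt d (∑ p ∈ Finset.univ.sigma fun i : Fin K => Finset.Ioi i,
      (∏ q ∈ (Finset.univ.sigma fun i : Fin K => Finset.Ioi i).erase p, (x q.2 - x q.1)) • Lmap K p) x :=
    hasFDerivAt_vdm K x
  have hterm : ∀ l ∈ Finset.univ.erase j,
      HasFDerivAt (fun y : Fin K → ℝ => (y j - y l)⁻¹)
        ((-((x j - x l) ^ 2)⁻¹) • Lmap K ⟨l, j⟩) x := by
    intro l hl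
    have hbase : HasFDerivAt (fun y : Fin K → ℝ => y j - y l) (Lmap K ⟨l, j⟩) x := by
      simpa [Lmap, Pi.sub_def] using (Lmap K ⟨l, j⟩).hasFDerivAt (x := x)
    have hne : x j - x l ≠ 0 :=
      sub_ne_zero.2 fun h => (Finset.mem_erase.1 hl).1 (hx h).symm
    exact (hasDerivAt_inv hne).comp_hasFDerivAt x hbase
  have hS : HasFDerivAt (fun y : Fin K → ℝ => ∑ l ∈ Finset.univ.erase j, (y j - y l)⁻¹)
      (∑ l ∈ Finset.univ.erase j, (-((x j - x l) ^ 2)⁻¹) • Lmap K ⟨l, j⟩) x :=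
    HasFDerivAt.fun_sum hterm
  have hG := hdD.fun_mul hS
  rw [hG.fderiv]
  -- evaluate at Pi.single i 1
  have h1 : (∑ p ∈ Finset.univ.sigma fun i : Fin K => Finset.Ioi i,
      (∏ q ∈ (Finset.univ.sigma fun i : Fin K => Finset.Ioi i).erase p, (x q.2 - x q.1)) • Lmap K p)
      (Pi.single i 1) = d x * ∑ k ∈ Finset.univ.erase i, (x i - x k)⁻¹ := by
    rw [← hdD.fderiv]
    exact fderiv_vdm_apply K x hx i
  have h2 : (∑ l ∈ Finset.univ.erase j, (-((x j - x l) ^ 2)⁻¹) • Lmap K ⟨l, j⟩)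
      (Pi.single i 1) = ((x j - x i) ^ 2)⁻¹ := by
    simp only [ContinuousLinearMap.coe_sum', Finset.sum_apply, ContinuousLinearMap.coe_smul',
      Pi.smul_apply, smul_eq_mul, Lmap, ContinuousLinearMap.sub_apply,
      ContinuousLinearMap.proj_apply]
    have : ∀ l ∈ Finset.univ.erase j,
        -((x j - x l) ^ 2)⁻¹ * ((Pi.single i 1 : Fin K → ℝ) j - (Pi.single i 1 : Fin K → ℝ) l)
        = if l = i then ((x j - x l) ^ 2)⁻¹ else 0 := by
      intro l hl
      rcases eq_or_ne l i with h | h <;>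
        simp [h, Pi.single_apply, hij.symm]
    rw [Finset.sum_congr rfl this, Finset.sum_ite_eq' _ i fun l => ((x j - x l) ^ 2)⁻¹]
    simp [Finset.mem_erase, hij]
  simp only [ContinuousLinearMap.add_apply, ContinuousLinearMap.coe_smul', Pi.smul_apply,
    smul_eq_mul, h1, h2]
  simp only [one_div]
  ring
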